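/- Let G be a group equipped with a left-invariant strict total order < (so a < b implies ga < gb for all g), and let T be an element of the center of G with 1 < T that is cofinal, i.e. for every g ∈ G there is n ∈ ℕ with g < T^n. Let Q be the quotient group of G by the (normal, since T is central) subgroup generated by T. Then Q is left-circularly orderable: there exists a ternary relation c on Q such that (cyclicity) c(a,b,d) implies c(b,d,a); (asymmetry) c(a,b,d) implies not c(d,b,a); (transitivity) c(a,b,d) and c(a,d,e) imply c(a,b,e); (totality) if a, b, d are pairwise distinct then c(a,b,d) or c(d,b,a); and (left-invariance) c(a,b,d) implies c(qa,qb,qd) for every q ∈ Q. -/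

import Mathlib

section Cyc

variable {α : Type*} [LinearOrder α]

/-- The standard cyclic relation induced by a linear order. -/
def cyc3 (u v w : α) : Prop :=
  (u < v ∧ v < w) ∨ (v < w ∧ w < u) ∨ (w < u ∧ u < v)

theorem cyc3_cycle {u v w : α} (h : cyc3 u v w) : cyc3 v w u := by
  rcases h with h | h | h
  · exact Or.inr (Or.inr h)
  · exact Or.inl h
  · exact Or.inr (Or.inl h)

theorem cyc3_asymm {u v w : α} (h : cyc3 u v w) : ¬ cyc3 w v u := by
  rintro (⟨c, d⟩ | ⟨c, d⟩ | ⟨c, d⟩) <;>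
    rcases h with ⟨a, b⟩ | ⟨a, b⟩ | ⟨a, b⟩ <;>
      first
        | exact lt_asymm a c | exact lt_asymm a d
        | exact lt_asymm b c | exact lt_asymm b d

theorem cyc3_trans {u v w e : α} (h : cyc3 u v w) (k : cyc3 u w e) : cyc3 u v e := by
  rcases h with ⟨a, b⟩ | ⟨a, b⟩ | ⟨a, b⟩ <;> rcases k with ⟨c, d⟩ | ⟨c, d⟩ | ⟨c, d⟩
  · exact Or.inl ⟨a, b.trans d⟩
  · exact Or.inr (Or.inl ⟨b.trans c, d⟩)
  · exact Or.inr (Or.inr ⟨c, a⟩)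
  · exact absurd c (lt_asymm b)
  · exact Or.inr (Or.inl ⟨a.trans c, d⟩)
  · exact absurd d (lt_asymm b)
  · exact absurd c (lt_asymm a)
  · exact Or.inr (Or.inr ⟨d, b⟩)
  · exact absurd d (lt_asymm a)

theorem cyc3_total {u v w : α} (h1 : u ≠ v) (h2 : v ≠ w) (h3 : u ≠ w) :
    cyc3 u v w ∨ cyc3 w v u := by
  rcases lt_trichotomy u v with huv | huv | huv
  · rcases lt_trichotomy v w with hvw | hvw | hvw
    · exact Or.inl (Or.inl ⟨huv, hvw⟩)
    · exact absurd hvw h2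
    · rcases lt_trichotomy u w with huw | huw | huw
      · exact Or.inr (Or.inr (Or.inr ⟨huw, hvw⟩))
      · exact absurd huw h3
      · exact Or.inl (Or.inr (Or.inr ⟨huw, huv⟩))
  · exact absurd huv h1
  · rcases lt_trichotomy v w with hvw | hvw | hvw
    · rcases lt_trichotomy u w with huw | huw | huw
      · exact Or.inr (Or.inr (Or.inl ⟨huv, huw⟩))
      · exact absurd huw h3
      · exact Or.inl (Or.inr (Or.inl ⟨hvw, huw⟩))
    · exact absurd hvw h2
    · exact Or.inr (Or.inl ⟨hvw, huv⟩)

end Cyc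

/-- If `T` is a central, positive, cofinal element for a left-invariant strict
total order on `G`, then the quotient `G / ⟨T⟩` is left-circularly orderable. -/
theorem quotient_by_central_cofinal_circularly_orderable {G : Type*} [Group G]
    (lt : G → G → Prop) (hsto : IsStrictTotalOrder G lt)
    (hlinv : ∀ g a b : G, lt a b → lt (g * a) (g * b))
    (T : G) (hT : T ∈ Subgroup.center G) (hTpos : lt 1 T)
    (hcof : ∀ g : G, ∃ n : ℕ, lt g (T ^ n)) :
    ∃ c : (G ⧸ Subgroup.zpowers T) → (G ⧸ Subgroup.zpowers T) →
          (G ⧸ Subgroup.zpowers T) → Prop,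
      (∀ a b d, c a b d → c b d a) ∧
      (∀ a b d, c a b d → ¬ c d b a) ∧
      (∀ a b d e, c a b d → c a d e → c a b e) ∧
      (∀ a b d, a ≠ b → b ≠ d → a ≠ d → c a b d ∨ c d b a) ∧
      (∀ q a b d : G,
        c (QuotientGroup.mk a) (QuotientGroup.mk b) (QuotientGroup.mk d) →
        c (QuotientGroup.mk (q * a)) (QuotientGroup.mk (q * b))
          (QuotientGroup.mk (q * d))) := by
  haveI := hsto
  haveI : DecidableRel lt := Classical.decRel lt
  letI : LinearOrder G := linearOrderOfSTO lt
  haveI covlt : CovariantClass G G (· * ·) (· < ·) := ⟨fun g a b h => hlinv g a b h⟩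
  haveI covle : CovariantClass G G (· * ·) (· ≤ ·) := ⟨by
    intro g a b h
    by_contra h'
    have h2 : g * b < g * a := lt_of_not_ge h'
    have h3 := hlinv g⁻¹ _ _ h2
    simp only [inv_mul_cancel_left] at h3
    exact absurd h (not_le_of_gt h3)⟩
  have hTpos' : (1 : G) < T := hTpos
  have hcomm : ∀ x : G, Commute x T := fun x =>
    ((Subgroup.mem_center_iff.mp hT) x)
  have hC : ∀ (x : G) (k : ℤ), x * T ^ k = T ^ k * x := fun x k =>
    ((hcomm x).zpow_right k)
  -- powers of T are strictly monotone
  have hpow : ∀ m n : ℤ, m < n → T ^ m < T ^ n := by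
    intro m n hmn
    have h1 : (1 : G) < T ^ (n - m) := by
      have hk : 0 < n - m := by omega
      have : T ^ (n - m) = T ^ (n - m).toNat := by
        rw [← zpow_natCast, Int.toNat_of_nonneg hk.le]
      rw [this]
      exact one_lt_pow' hTpos' (by omega)
    calc T ^ m = T ^ m * 1 := (mul_one _).symm
      _ < T ^ m * T ^ (n - m) := mul_lt_mul_right h1 _
      _ = T ^ n := by rw [← zpow_add]; ring_nf
  have hpowle : ∀ m n : ℤ, m ≤ n → T ^ m ≤ T ^ n := by
    intro m n h
    rcases eq_or_lt_of_le h with rfl | h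
    · exact le_refl _
    · exact (hpow _ _ h).le
  -- the floor function
  have hex : ∀ g : G, ∃ k : ℤ, (T ^ k ≤ g) ∧ ∀ z : ℤ, T ^ z ≤ g → z ≤ k := by
    intro g
    obtain ⟨n, hn⟩ := hcof g
    obtain ⟨m, hm⟩ := hcof g⁻¹
    have hbd : ∀ z : ℤ, T ^ z ≤ g → z ≤ n := by
      intro z hz
      by_contra h
      have h2 : T ^ (n : ℤ) ≤ T ^ z := hpowle _ _ (by omega)
      have hn' : g < T ^ (n : ℤ) := by rw [zpow_natCast]; exact hn
      exact absurd (h2.trans hz) (not_le_of_gt hn')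
    have hinh : T ^ (-(m : ℤ)) ≤ g := by
      have h1 : g⁻¹ < T ^ (m : ℤ) := by rw [zpow_natCast]; exact hm
      have h2 : g * g⁻¹ < g * T ^ (m : ℤ) := mul_lt_mul_right h1 g
      rw [mul_inv_cancel, hC] at h2
      have h3 := mul_lt_mul_right h2 (T ^ (-(m : ℤ)))
      rw [mul_one, ← mul_assoc, ← zpow_add] at h3
      simp only [neg_add_cancel, zpow_zero, one_mul] at h3
      exact h3.le
    obtain ⟨k, hk1, hk2⟩ := Int.exists_greatest_of_bdd ⟨(n : ℤ), hbd⟩ ⟨_, hinh⟩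
    exact ⟨k, hk1, hk2⟩
  choose F hF1 hF2 using hex
  have hF3 : ∀ g : G, g < T ^ (F g + 1) := by
    intro g
    by_contra h
    have := hF2 g (F g + 1) (le_of_not_gt h)
    omega
  have hshift : ∀ (k : ℤ) (g : G), F (T ^ k * g) = k + F g := by
    intro k g
    have h1 : k + F g ≤ F (T ^ k * g) := by
      apply hF2
      calc T ^ (k + F g) = T ^ k * T ^ F g := zpow_add T k (F g)
        _ ≤ T ^ k * g := mul_le_mul_right (hF1 g) _
    have h2 : -k + F (T ^ k * g) ≤ F g := by
      apply hF2
      have h3 := mul_le_mul_right (hF1 (T ^ k * g)) (T ^ (-k))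
      rw [← mul_assoc, ← zpow_add, ← zpow_add] at h3
      simpa using h3
    omega
  -- representative in the fundamental domain
  set r : G → G := fun g => T ^ (-F g) * g with hr
  have hr1 : ∀ g, (1 : G) ≤ r g := by
    intro g
    have h := mul_le_mul_right (hF1 g) (T ^ (-F g))
    rw [← zpow_add, show -F g + F g = 0 from by ring, zpow_zero] at h
    exact h
  have hr2 : ∀ g, r g < T := by
    intro g
    have := mul_lt_mul_right (hF3 g) (T ^ (-F g))
    rw [← zpow_add] at this
    simp only [hr]
    calc T ^ (-F g) * g < T ^ (-F g + (F g + 1)) := this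
      _ = T := by rw [show -F g + (F g + 1) = 1 by ring, zpow_one]
  have hrmk : ∀ g : G, (QuotientGroup.mk (r g) : G ⧸ Subgroup.zpowers T)
      = QuotientGroup.mk g := by
    intro g
    apply (QuotientGroup.eq (s := Subgroup.zpowers T)).mpr
    refine ⟨F g, ?_⟩
    show T ^ F g = (r g)⁻¹ * g
    simp only [hr, mul_inv_rev, inv_inv, zpow_neg]
    rw [mul_assoc, ← hC, ← mul_assoc, inv_mul_cancel, one_mul]
  have hrcst : ∀ a b : G, (QuotientGroup.mk a : G ⧸ Subgroup.zpowers T)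
      = QuotientGroup.mk b → r a = r b := by
    intro a b hab
    obtain ⟨k, hk⟩ := (QuotientGroup.eq (s := Subgroup.zpowers T)).mp hab
    have hk' : (T : G) ^ k = a⁻¹ * b := hk
    have hb : b = T ^ k * a := by rw [← hC a k, hk']; group
    subst hb
    simp only [hr, hshift]
    rw [← mul_assoc, ← zpow_add, show -(k + F a) + k = -F a from by ring]
  haveI hnormal : (Subgroup.zpowers T).Normal := by
    constructor
    intro x hx g
    obtain ⟨k, hk⟩ := Subgroup.mem_zpowers_iff.mp hx
    refine Subgroup.mem_zpowers_iff.mpr ⟨k, ?_⟩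
    rw [← hk, mul_assoc, ← hC, ← mul_assoc, mul_inv_cancel, one_mul]
  have hz : ∀ m : ℤ, T ^ (-(m + 1)) * T = T ^ (-m) := by intro m; group
  have hz2 : ∀ m : ℤ, T * T ^ (m + 1) = T ^ (m + 2) := by intro m; group
  -- key comparison lemma
  have hK : ∀ q u v : G, 1 ≤ u → u < v → v < T →
      (F (q * v) = F (q * u) ∧ r (q * u) < r (q * v)) ∨
      (F (q * v) = F (q * u) + 1 ∧ r (q * v) < r (q * u)) := by
    intro q u v hu huv hv
    have hquv : q * u < q * v := mul_lt_mul_right huv q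
    have h1 : F (q * u) ≤ F (q * v) := hF2 _ _ ((hF1 (q * u)).trans hquv.le)
    have hchain : q * v < T * (q * u) := by
      have a3 : q ≤ q * u := by
        calc q = q * 1 := (mul_one q).symm
          _ ≤ q * u := mul_le_mul_right hu q
      calc q * v < q * T := mul_lt_mul_right hv q
        _ = T * q := hcomm q
        _ ≤ T * (q * u) := mul_le_mul_right a3 T
    have h2 : F (q * v) ≤ F (q * u) + 1 := by
      by_contra h
      have hb : T ^ (F (q * u) + 2) ≤ T ^ F (q * v) := hpowle _ _ (by omega)
      have hlt : q * v < T ^ (F (q * u) + 2) := by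
        calc q * v < T * (q * u) := hchain
          _ < T * T ^ (F (q * u) + 1) := mul_lt_mul_right (hF3 (q * u)) T
          _ = T ^ (F (q * u) + 2) := hz2 _
      exact absurd (hb.trans (hF1 (q * v))) (not_le_of_gt hlt)
    have hor : F (q * v) = F (q * u) ∨ F (q * v) = F (q * u) + 1 := by omega
    rcases hor with he | he
    · left
      refine ⟨he, ?_⟩
      simp only [hr, he]
      exact mul_lt_mul_right hquv _
    · right
      refine ⟨he, ?_⟩
      simp only [hr, he]
      calc T ^ (-(F (q * u) + 1)) * (q * v)
          < T ^ (-(F (q * u) + 1)) * (T * (q * u)) := mul_lt_mul_right hchain _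
        _ = T ^ (-F (q * u)) * (q * u) := by rw [← mul_assoc, hz]
  -- the rotation lemma
  have haux : ∀ q u v w : G, 1 ≤ u → u < v → v < w → w < T →
      cyc3 (r (q * u)) (r (q * v)) (r (q * w)) := by
    intro q u v w hu huv hvw hw
    have h1 := hK q u v hu huv (hvw.trans hw)
    have h2 := hK q v w (hu.trans huv.le) hvw hw
    have h3 := hK q u w hu (huv.trans hvw) hw
    rcases h1 with ⟨e1, p1⟩ | ⟨e1, p1⟩ <;> rcases h2 with ⟨e2, p2⟩ | ⟨e2, p2⟩ <;>
      rcases h3 with ⟨e3, p3⟩ | ⟨e3, p3⟩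
    · exact Or.inl ⟨p1, p2⟩
    · omega
    · omega
    · exact Or.inr (Or.inr ⟨p3, p1⟩)
    · omega
    · exact Or.inr (Or.inl ⟨p2, p3⟩)
    · omega
    · omega
  -- the circular order on the quotient
  set R : (G ⧸ Subgroup.zpowers T) → G := fun x => r x.out with hRdef
  have hmkout : ∀ x : G ⧸ Subgroup.zpowers T, QuotientGroup.mk x.out = x :=
    fun x => Quotient.out_eq x
  have hRmk : ∀ a : G, R (QuotientGroup.mk a) = r a := by
    intro a
    exact hrcst _ _ (hmkout _)
  have hmkR : ∀ x : G ⧸ Subgroup.zpowers T, QuotientGroup.mk (R x) = x := by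
    intro x
    rw [hRdef]
    rw [hrmk x.out]
    exact hmkout x
  have hRinj : ∀ x y : G ⧸ Subgroup.zpowers T, R x = R y → x = y := by
    intro x y hxy
    rw [← hmkR x, ← hmkR y, hxy]
  refine ⟨fun x y z => cyc3 (R x) (R y) (R z), ?_, ?_, ?_, ?_, ?_⟩
  · exact fun a b d h => cyc3_cycle h
  · exact fun a b d h => cyc3_asymm h
  · exact fun a b d e h k => cyc3_trans h k
  · intro a b d h1 h2 h3
    exact cyc3_total (fun h => h1 (hRinj _ _ h)) (fun h => h2 (hRinj _ _ h))
      (fun h => h3 (hRinj _ _ h))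
  · intro q a b d h
    rw [hRmk, hRmk, hRmk] at h ⊢
    have key : ∀ g : G, r (q * g) = r (q * r g) := by
      intro g
      apply hrcst
      rw [QuotientGroup.mk_mul, QuotientGroup.mk_mul, hrmk]
    rw [key a, key b, key d]
    rcases h with ⟨x1, x2⟩ | ⟨x1, x2⟩ | ⟨x1, x2⟩
    · exact haux q (r a) (r b) (r d) (hr1 a) x1 x2 (hr2 d)
    · exact cyc3_cycle (cyc3_cycle (haux q (r b) (r d) (r a) (hr1 b) x1 x2 (hr2 a)))
    · exact cyc3_cycle (haux q (r d) (r a) (r b) (hr1 d) x1 x2 (hr2 b))
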